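/- Let A be a commutative ring with unity, Φ ∈ A^{n×(n-1)}, Ψ ∈ A^{(n-1)×n} with ΨΦ = I_{n-1}. Let Φ_e = [Φ N] where N ∈ A^{n×1} has entries N_j = (-1)^{j-1} Δ_{·;j}(Ψ), and let Ψ_e = [Ψ; Ñ] for an arbitrary row Ñ ∈ A^{1×n}. Then Ψ_e Φ_e is the block matrix [[I_{n-1}, 0],[ÑΦ, ÑN]] (i.e., the top-right (n-1)×1 block is zero). -/

import Mathlib

open Matrix

/-- Key: a row of Ψ dotted with the signed maximal minors of Ψ is zero. -/
lemma key_orth {R : Type*} [CommRing R] {n : ℕ}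
    (Ψ : Matrix (Fin n) (Fin (n + 1)) R) (q : Fin n) :
    ∑ p, Ψ q p * ((-1 : R) ^ (p : ℕ) * (Ψ.submatrix id p.succAbove).det) = 0 := by
  have hM : (Matrix.of (Fin.cons (Ψ q) Ψ) : Matrix (Fin (n + 1)) (Fin (n + 1)) R).det = 0 := by
    apply Matrix.det_zero_of_row_eq (i := 0) (j := q.succ) (Fin.succ_ne_zero q).symm
    funext b; rfl
  rw [Matrix.det_succ_row_zero] at hM
  rw [← hM]
  apply Finset.sum_congr rfl
  intro p _
  have : ((Matrix.of (Fin.cons (Ψ q) Ψ) : Matrix (Fin (n + 1)) (Fin (n + 1)) R).submatrix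
      Fin.succ p.succAbove) = Ψ.submatrix id p.succAbove := by
    ext a b; rfl
  rw [this]
  simp only [Matrix.of_apply, Fin.cons_zero]
  change Ψ q p * _ = _ * Ψ q p * _
  ring

/-- Theorem 2.4(i): with N the column of signed maximal minors of Ψ and Ñ arbitrary,
Ψ_e Φ_e = [[I, 0], [ÑΦ, ÑN]]. -/
theorem stmt8 {R : Type*} [CommRing R] {n : ℕ}
    (Φ : Matrix (Fin (n + 1)) (Fin n) R) (Ψ : Matrix (Fin n) (Fin (n + 1)) R)
    (h : Ψ * Φ = 1)
    (N : Fin (n + 1) → R)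
    (hN : ∀ j, N j = (-1 : R) ^ (j : ℕ) * (Ψ.submatrix id j.succAbove).det)
    (Nt : Fin (n + 1) → R)
    (Φe Ψe : Matrix (Fin (n + 1)) (Fin (n + 1)) R)
    (hΦe : ∀ i j, Φe i j = (Fin.snoc (Φ i) (N i) : Fin (n + 1) → R) j)
    (hΨe : ∀ i j, Ψe i j = (Fin.snoc (fun q => Ψ q j) (Nt j) : Fin (n + 1) → R) i) :
    Ψe * Φe = (Matrix.reindex finSumFinEquiv finSumFinEquiv)
      (Matrix.fromBlocks (1 : Matrix (Fin n) (Fin n) R) 0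
        (Matrix.of fun (_ : Fin 1) j => ∑ p, Nt p * Φ p j)
        (Matrix.of fun (_ : Fin 1) (_ : Fin 1) => ∑ p, Nt p * N p)) := by
  have key : ∀ q : Fin n, ∑ p, Ψ q p * N p = 0 := by
    intro q
    simp only [hN]
    exact key_orth Ψ q
  ext i j
  rw [Matrix.mul_apply]
  simp only [hΨe, hΦe, Matrix.reindex_apply, Matrix.submatrix_apply]
  refine Fin.lastCases ?_ ?_ i <;> [skip; intro i'] <;>
    refine Fin.lastCases ?_ ?_ j <;> [skip; intro j'; skip; intro j']
  · simp [Fin.snoc_last]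
  · have hj : finSumFinEquiv.symm (Fin.castSucc j') = Sum.inl j' := by
      exact finSumFinEquiv_symm_apply_castAdd j'
    simp [Fin.snoc_last, Fin.snoc_castSucc, hj]
  · have hi : finSumFinEquiv.symm (Fin.castSucc i') = Sum.inl i' := by
      exact finSumFinEquiv_symm_apply_castAdd i'
    simp only [Fin.snoc_castSucc, Fin.snoc_last, hi]
    simp [key i']
  · have hi : finSumFinEquiv.symm (Fin.castSucc i') = Sum.inl i' := by
      exact finSumFinEquiv_symm_apply_castAdd i'
    have hj : finSumFinEquiv.symm (Fin.castSucc j') = Sum.inl j' := by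
      exact finSumFinEquiv_symm_apply_castAdd j'
    simp only [Fin.snoc_castSucc, hi, hj, Matrix.fromBlocks_apply₁₁]
    have := congrFun (congrFun h i') j'
    rw [Matrix.mul_apply] at this
    exact this
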